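/- If c ⊆ On is a code for a set y (via a bijection f : α → tc({y}) with f(0) = y and c = {p(ι,ξ) : f(ι) ∈ f(ξ)}), and x ∈ tc(y), then the derived code c_x^c — obtained by letting α' be the order type of f⁻¹[tc({x})], o : α' → f⁻¹[tc({x})] the order isomorphism, and f'(ξ) = f(o(ξ)) — is a genuine code for x: f' is a bijection from α' to tc({x}) with f'(0) = x when o is rearranged so that the index of x maps to 0. -/

import Mathlib

/-- The class `tc({y})`: sets reachable from `y` by iterated membership,
including `y` itself. -/
def tcRC (y : ZFSet) : Set ZFSet := {z | Relation.ReflTransGen (· ∈ ·) z y}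

/-- `c ⊆ On` is a code for the set `y` (relative to an ordinal pairing function
`p`): there is an ordinal `α` and a bijection `f` from `α` onto `tc({y})` with
`f 0 = y` such that `c = {p ι ξ : f ι ∈ f ξ}`. -/
def IsCode (p : Ordinal → Ordinal → Ordinal) (c : Set Ordinal) (y : ZFSet) : Prop :=
  ∃ (α : Ordinal) (f : Ordinal → ZFSet),
    Set.BijOn f (Set.Iio α) (tcRC y) ∧ f 0 = y ∧
      c = {o | ∃ ι ∈ Set.Iio α, ∃ ξ ∈ Set.Iio α, f ι ∈ f ξ ∧ o = p ι ξ}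

/-- Helper: if some `F` maps `Set.Iio β` bijectively onto `tc({x})`, then there
is a code for `x` (rearrange so that `0` is sent to `x`). -/
theorem exists_code_of_bijOn.{v, v2, w} (p : Ordinal.{v} → Ordinal.{v} → Ordinal.{v2}) (x : ZFSet.{w})
    (β : Ordinal.{v}) (F : Ordinal.{v} → ZFSet.{w}) (hF : Set.BijOn F (Set.Iio β) (tcRC x)) :
    ∃ c' : Set Ordinal, IsCode p c' x := by
  have hxx : x ∈ tcRC x := Relation.ReflTransGen.refl
  obtain ⟨ι₀, hι₀, hFι₀⟩ := hF.surjOn hxx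
  have h0 : (0 : Ordinal) ∈ Set.Iio β := lt_of_le_of_lt (zero_le : (0 : Ordinal) ≤ ι₀) hι₀
  set e := Equiv.swap (0 : Ordinal) ι₀ with he
  have hmaps : Set.MapsTo e (Set.Iio β) (Set.Iio β) := by
    intro ξ hξ
    rcases eq_or_ne ξ 0 with rfl | h1
    · simpa [he] using hι₀
    rcases eq_or_ne ξ ι₀ with rfl | h2
    · simpa [he] using h0
    · simpa [he, Equiv.swap_apply_of_ne_of_ne h1 h2] using hξ
  have hesurj : Set.SurjOn e (Set.Iio β) (Set.Iio β) := by
    intro ξ hξ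
    exact ⟨e ξ, hmaps hξ, by simp [he]⟩
  have hebij : Set.BijOn e (Set.Iio β) (Set.Iio β) :=
    ⟨hmaps, e.injective.injOn, hesurj⟩
  have hbij : Set.BijOn (fun ξ => F (e ξ)) (Set.Iio β) (tcRC x) := hF.comp hebij
  refine ⟨_, β, fun ξ => F (e ξ), hbij, ?_, rfl⟩
  simpa [he] using hFι₀

/-- The derived code is a genuine code: if `c` codes `y` via `f : α → tc({y})`,
`x ∈ tc(y)`, `α'` is the order type of `f⁻¹[tc({x})]` and `o : α' → f⁻¹[tc({x})]`
is the order isomorphism, then `f' = f ∘ o` is a bijection from `α'` onto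
`tc({x})`, and (after rearranging so that the index of `x` maps to `0`) it yields
a code for `x`. -/

theorem derived_code_is_code (p : Ordinal → Ordinal → Ordinal)
    (hp : Function.Injective fun q : Ordinal × Ordinal => p q.1 q.2)
    (y : ZFSet) (α : Ordinal) (f : Ordinal → ZFSet) (c : Set Ordinal)
    (hf : Set.BijOn f (Set.Iio α) (tcRC y)) (hf0 : f 0 = y)
    (hc : c = {o | ∃ ι ∈ Set.Iio α, ∃ ξ ∈ Set.Iio α, f ι ∈ f ξ ∧ o = p ι ξ})
    (x : ZFSet) (hx : Relation.TransGen (· ∈ ·) x y)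
    (α' : Ordinal) (o : Ordinal → Ordinal)
    (ho1 : StrictMonoOn o (Set.Iio α'))
    (ho2 : Set.BijOn o (Set.Iio α') {ι | ι ∈ Set.Iio α ∧ f ι ∈ tcRC x}) :
    Set.BijOn (fun ξ => f (o ξ)) (Set.Iio α') (tcRC x) ∧
      ∃ c' : Set Ordinal, IsCode p c' x := by
  -- first component: `f ∘ o` is a bijection onto `tc({x})`
  have hsub : tcRC x ⊆ tcRC y := fun z hz =>
    Relation.ReflTransGen.trans hz hx.to_reflTransGen
  have hfS : Set.BijOn f {ι | ι ∈ Set.Iio α ∧ f ι ∈ tcRC x} (tcRC x) := by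
    refine ⟨fun ι hι => hι.2, hf.injOn.mono (fun ι hι => hι.1), fun z hz => ?_⟩
    obtain ⟨ι, hι, rfl⟩ := hf.surjOn (hsub hz)
    exact ⟨ι, ⟨hι, hz⟩, rfl⟩
  have hg : Set.BijOn (fun ξ => f (o ξ)) (Set.Iio α') (tcRC x) := hfS.comp ho2
  refine ⟨hg, ?_⟩
  -- second component: transfer to an ordinal in the right universe
  set u := (Ordinal.ToType.mk (o := α)) with hu
  set T : Set α.ToType := {a | f ((u.symm a : Set.Iio α) : Ordinal) ∈ tcRC x} with hT
  set r : ↥T → ↥T → Prop := (· < ·) with hr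
  set β := Ordinal.type r with hβ
  set E := Ordinal.enum r with hE
  set F : Ordinal → ZFSet :=
    fun ξ => if h : ξ < β then f ((u.symm (E ⟨ξ, h⟩) : Set.Iio α) : Ordinal) else x with hF
  have hFval : ∀ {ξ} (h : ξ < β), F ξ = f ((u.symm (E ⟨ξ, h⟩) : Set.Iio α) : Ordinal) := by
    intro ξ h; simp [hF, h]
  have hFbij : Set.BijOn F (Set.Iio β) (tcRC x) := by
    refine ⟨?_, ?_, ?_⟩
    · intro ξ hξ
      rw [hFval hξ]
      exact (E ⟨ξ, hξ⟩).2
    · intro ξ₁ h₁ ξ₂ h₂ heq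
      rw [hFval h₁, hFval h₂] at heq
      have h3 := hf.injOn (u.symm (E ⟨ξ₁, h₁⟩)).2 (u.symm (E ⟨ξ₂, h₂⟩)).2 heq
      have h4 : u.symm (E ⟨ξ₁, h₁⟩) = u.symm (E ⟨ξ₂, h₂⟩) := Subtype.ext h3
      have h5 : E ⟨ξ₁, h₁⟩ = E ⟨ξ₂, h₂⟩ := Subtype.ext (u.symm.injective h4)
      have h6 := E.injective h5
      exact congrArg Subtype.val h6
    · intro z hz
      obtain ⟨ι, hι, rfl⟩ := hf.surjOn (hsub hz)
      have haT : u ⟨ι, hι⟩ ∈ T := by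
        show f ((u.symm (u ⟨ι, hι⟩) : Set.Iio α) : Ordinal) ∈ tcRC x
        rw [u.symm_apply_apply]
        exact hz
      set w := E.symm ⟨u ⟨ι, hι⟩, haT⟩ with hw
      refine ⟨w.1, w.2, ?_⟩
      rw [hFval w.2]
      have : E ⟨w.1, w.2⟩ = ⟨u ⟨ι, hι⟩, haT⟩ := by
        rw [show (⟨w.1, w.2⟩ : Set.Iio β) = w from rfl, hw]
        exact E.apply_symm_apply _
      rw [this]
      show f ((u.symm (u ⟨ι, hι⟩) : Set.Iio α) : Ordinal) = f ι
      rw [u.symm_apply_apply]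
  exact exists_code_of_bijOn p x β F hFbij
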